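/- Every principal eigenvalue satisfies λ ≤ 1; moreover, if β ∈ (0,1/2], then λ < 1. -/

import Mathlib

open Filter Finset Topology

/-- The weight `p_β`: `1` if `β = 0`, and `β/(1-β)` otherwise. -/
noncomputable def pB (β : ℝ) : ℝ := if β = 0 then 1 else β / (1 - β)

/-- Vertices of the regular `m`-branching tree are finite sequences over `Fin m`
(the root is `[]`, the successors of `x` are `i :: x`, the predecessor of `a :: t` is `t`,
and the level `|x|` is the list length).  The `β`-Laplacian on the tree. -/
noncomputable def lapB (m : ℕ) (β : ℝ) (u : List (Fin m) → ℝ) : List (Fin m) → ℝ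
  | [] => (∑ i : Fin m, u [i]) / m - u []
  | a :: t =>
      (β * u t + (1 - β) * (∑ i : Fin m, u (i :: a :: t)) / m - u (a :: t)) *
        pB β ^ (-((a :: t).length : ℤ))

/-- A branch: an infinite path starting at the root, following successors. -/
def IsBranch (m : ℕ) (b : ℕ → List (Fin m)) : Prop :=
  b 0 = [] ∧ ∀ n, ∃ i : Fin m, b (n + 1) = i :: b n

/-- Homogeneous Dirichlet boundary condition: `u → 0` along every branch. -/
def ZeroOnBoundary (m : ℕ) (u : List (Fin m) → ℝ) : Prop :=
  ∀ b : ℕ → List (Fin m), IsBranch m b → Tendsto (fun n => u (b n)) atTop (𝓝 0)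

/-- `lam` is a principal eigenvalue of `Δ_β`: it is positive and admits a bounded
nonnegative nontrivial eigenfunction vanishing on the boundary. -/
def IsPrincipalEigenvalue (m : ℕ) (β lam : ℝ) : Prop :=
  0 < lam ∧ ∃ u : List (Fin m) → ℝ,
    (∃ M, ∀ x, |u x| ≤ M) ∧ (∀ x, 0 ≤ u x) ∧ u ≠ 0 ∧
    (∀ x, -lapB m β u x = lam * u x) ∧ ZeroOnBoundary m u

/-- Membership in the set `A_β`. -/
def memA (m : ℕ) (β lam : ℝ) : Prop :=
  0 < lam ∧ ∃ v : List (Fin m) → ℝ, ∃ c C : ℝ, 0 < c ∧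
    (∀ x, c < v x ∧ v x < C) ∧ ∀ x, lapB m β v x + lam * v x ≤ 0

/-- `λ₁(β) = sup A_β`. -/
noncomputable def lam1 (m : ℕ) (β : ℝ) : ℝ := sSup {lam | memA m β lam}

theorem stmt5 (m : ℕ) (hm : 2 ≤ m) (β : ℝ) (hβ0 : 0 ≤ β) (hβ1 : β < 1)
    (lam : ℝ) (h : IsPrincipalEigenvalue m β lam) :
    lam ≤ 1 ∧ (0 < β → β ≤ 1 / 2 → lam < 1) := by
  obtain ⟨hlam, u, -, hpos, hne, heq, -⟩ := h
  have hm0 : (0:ℝ) < m := by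
    have : 0 < m := by omega
    exact_mod_cast this
  have hne' : ∃ x, u x ≠ 0 := by
    by_contra hc
    push_neg at hc
    exact hne (funext fun x => hc x)
  have hroot : (∑ i : Fin m, u [i]) / m = (1 - lam) * u [] := by
    have he := heq []
    simp only [lapB] at he
    linarith
  have hsumnn : (0:ℝ) ≤ ∑ i : Fin m, u [i] := Finset.sum_nonneg fun i _ => hpos _
  rcases eq_or_lt_of_le hβ0 with hb0 | hb0
  · -- β = 0
    have hβ : β = 0 := hb0.symm
    subst hβ
    refine ⟨?_, fun hb _ => absurd hb (lt_irrefl 0)⟩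
    obtain ⟨x₀, hx₀⟩ := hne'
    have hx₀' : 0 < u x₀ := lt_of_le_of_ne (hpos _) (Ne.symm hx₀)
    cases x₀ with
    | nil =>
      have hd : 0 ≤ (∑ i : Fin m, u [i]) / m := div_nonneg hsumnn hm0.le
      nlinarith
    | cons a t =>
      have he := heq (a :: t)
      have hp1 : pB (0:ℝ) = 1 := by simp [pB]
      simp only [lapB, hp1, one_zpow, mul_one, zero_mul, one_mul, zero_add] at he
      have hS : (0:ℝ) ≤ ∑ i : Fin m, u (i :: a :: t) :=
        Finset.sum_nonneg fun i _ => hpos _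
      have hd : 0 ≤ ((1 - (0:ℝ)) * ∑ i : Fin m, u (i :: a :: t)) / m :=
        div_nonneg (mul_nonneg (by norm_num) hS) hm0.le
      nlinarith
  · -- β > 0
    have h1b : (0:ℝ) < 1 - β := by linarith
    have hp : 0 < pB β := by
      rw [pB, if_neg hb0.ne']
      positivity
    have hkey : ∀ (a : Fin m) (t : List (Fin m)), u (a :: t) = 0 →
        u t = 0 ∧ ∀ i : Fin m, u (i :: a :: t) = 0 := by
      intro a t h0
      have he := heq (a :: t)
      simp only [lapB, h0, mul_zero, sub_zero] at he
      have hPpos : 0 < pB β ^ (-(((a :: t).length : ℤ))) := zpow_pos hp _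
      have hE : β * u t + (1 - β) * (∑ i : Fin m, u (i :: a :: t)) / m = 0 := by
        have hmul : (β * u t + (1 - β) * (∑ i : Fin m, u (i :: a :: t)) / m) *
            pB β ^ (-(((a :: t).length : ℤ))) = 0 := by linarith
        rcases mul_eq_zero.mp hmul with h | h
        · exact h
        · exact absurd h hPpos.ne'
      have hS : (0:ℝ) ≤ ∑ i : Fin m, u (i :: a :: t) :=
        Finset.sum_nonneg fun i _ => hpos _
      have ht1 : 0 ≤ β * u t := mul_nonneg hb0.le (hpos t)
      have ht2 : 0 ≤ (1 - β) * (∑ i : Fin m, u (i :: a :: t)) / m :=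
        div_nonneg (mul_nonneg h1b.le hS) hm0.le
      have hβt : β * u t = 0 := by linarith
      have hSig : (1 - β) * (∑ i : Fin m, u (i :: a :: t)) / m = 0 := by linarith
      constructor
      · rcases mul_eq_zero.mp hβt with h | h
        · exact absurd h hb0.ne'
        · exact h
      · intro i
        have hsum0 : (∑ i : Fin m, u (i :: a :: t)) = 0 := by
          have h2 : (1 - β) * (∑ i : Fin m, u (i :: a :: t)) = 0 := by
            have h3 := hSig
            rw [div_eq_zero_iff] at h3
            rcases h3 with h | h
            · exact h
            · exact absurd h hm0.ne'
          rcases mul_eq_zero.mp h2 with h | h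
          · exact absurd h h1b.ne'
          · exact h
        exact (Finset.sum_eq_zero_iff_of_nonneg (fun i _ => hpos _)).mp hsum0 i
          (Finset.mem_univ i)
    have hup : ∀ x : List (Fin m), u x = 0 → u [] = 0 := by
      intro x
      induction x with
      | nil => exact fun h => h
      | cons a t ih => exact fun h0 => ih (hkey a t h0).1
    have hdown : u [] = 0 → ∀ x, u x = 0 := by
      intro h0 x
      induction x with
      | nil => exact h0
      | cons a t ih =>
        cases t with
        | nil =>
          have hs0 : (∑ i : Fin m, u [i]) / m = 0 := by rw [hroot, ih, mul_zero]
          have hs : (∑ i : Fin m, u [i]) = 0 := by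
            field_simp at hs0
            simpa using hs0
          simpa using (Finset.sum_eq_zero_iff_of_nonneg (fun i _ => hpos _)).mp hs a
            (Finset.mem_univ a)
        | cons b s => exact (hkey b s ih).2 a
    have hr0 : u [] ≠ 0 := by
      intro h0
      obtain ⟨x, hx⟩ := hne'
      exact hx (hdown h0 x)
    have hrpos : 0 < u [] := lt_of_le_of_ne (hpos _) (Ne.symm hr0)
    have hipos : ∀ i : Fin m, 0 < u [i] := fun i =>
      lt_of_le_of_ne (hpos _) (Ne.symm fun h0 => hr0 (hup _ h0))
    haveI : Nonempty (Fin m) := ⟨⟨0, by omega⟩⟩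
    have hsum : 0 < ∑ i : Fin m, u [i] :=
      Finset.sum_pos (fun i _ => hipos i) Finset.univ_nonempty
    have hlt : lam < 1 := by
      have hgt : 0 < (1 - lam) * u [] := hroot ▸ div_pos hsum hm0
      nlinarith
    exact ⟨hlt.le, fun _ _ => hlt⟩
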